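/- Fix i ∈ {1,…,K}. (a) If g_i ∈ 𝒮_i, then f_i(g_i) ≤ f_i(a) for all a ∈ 𝒮_i. (b) If g_i > 1/(h_i·√P), then 1/(h_i·√P) ∈ 𝒮_i and f_i(1/(h_i·√P)) ≤ f_i(a) for all a ∈ 𝒮_i. (c) If i < K and g_i ≤ 1/(h_{i+1}·√P), then the infimum of f_i over 𝒮_i equals f_i(1/(h_{i+1}·√P)) and this infimum is not attained at any point of 𝒮_i. -/
import Mathlib
set_option maxHeartbeats 1000000


open Finset

/-- Membership in the interval `𝒮ᵢ` (valid for `0 ≤ i ≤ K`):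
`𝒮₀ = (1/(h₁√P), ∞)`, `𝒮ᵢ = (1/(h_{i+1}√P), 1/(hᵢ√P)]` for `1 ≤ i ≤ K-1`,
`𝒮_K = [0, 1/(h_K√P)]`. -/
noncomputable def memS (K : ℕ) (h : ℕ → ℝ) (P : ℝ) (i : ℕ) (a : ℝ) : Prop :=
  (if i = K then 0 ≤ a else 1 / (h (i + 1) * Real.sqrt P) < a) ∧
  (if i = 0 then True else a ≤ 1 / (h i * Real.sqrt P))

/-- `f_i(a) = ∑_{k=1}^{i} (a h_k √P - 1)² + σ² a²`. -/
noncomputable def f (h : ℕ → ℝ) (P σ : ℝ) (i : ℕ) (a : ℝ) : ℝ :=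
  (∑ k ∈ Finset.Icc 1 i, (a * h k * Real.sqrt P - 1) ^ 2) + σ ^ 2 * a ^ 2

/-- `g₀ = 0` and `g_i = √P (∑_{k=1}^i h_k)/(σ² + P ∑_{k=1}^i h_k²)`. -/
noncomputable def g (h : ℕ → ℝ) (P σ : ℝ) (i : ℕ) : ℝ :=
  Real.sqrt P * (∑ k ∈ Finset.Icc 1 i, h k) /
    (σ ^ 2 + P * ∑ k ∈ Finset.Icc 1 i, (h k) ^ 2)

theorem stmt_1 (K : ℕ) (hK : 1 ≤ K) (h : ℕ → ℝ) (P σ : ℝ) (hP : 0 < P) (hσ : 0 < σ)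
    (hpos : 0 < h 1) (hmono : ∀ k, 1 ≤ k → k < K → h k < h (k + 1))
    (i : ℕ) (hi1 : 1 ≤ i) (hiK : i ≤ K) :
    -- (a) if `g_i ∈ 𝒮_i`, then `g_i` minimizes `f_i` over `𝒮_i`
    (memS K h P i (g h P σ i) →
      ∀ a : ℝ, memS K h P i a → f h P σ i (g h P σ i) ≤ f h P σ i a) ∧
    -- (b) if `g_i > 1/(h_i √P)`, then `1/(h_i √P) ∈ 𝒮_i` and it minimizes `f_i` over `𝒮_i`
    (1 / (h i * Real.sqrt P) < g h P σ i →
      memS K h P i (1 / (h i * Real.sqrt P)) ∧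
      ∀ a : ℝ, memS K h P i a →
        f h P σ i (1 / (h i * Real.sqrt P)) ≤ f h P σ i a) ∧
    -- (c) if `i < K` and `g_i ≤ 1/(h_{i+1} √P)`, the infimum of `f_i` over `𝒮_i` equals
    -- `f_i(1/(h_{i+1} √P))` and it is not attained at any point of `𝒮_i`
    (i < K → g h P σ i ≤ 1 / (h (i + 1) * Real.sqrt P) →
      IsGLB (f h P σ i '' {a : ℝ | memS K h P i a})
        (f h P σ i (1 / (h (i + 1) * Real.sqrt P))) ∧
      ∀ a : ℝ, memS K h P i a →
        f h P σ i (1 / (h (i + 1) * Real.sqrt P)) < f h P σ i a) := by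

  have hsP : 0 < Real.sqrt P := Real.sqrt_pos.2 hP
  have hposk : ∀ k, 1 ≤ k → k ≤ K → 0 < h k := by
    intro k hk1 hkK
    induction k with
    | zero => omega
    | succ n ih =>
      rcases Nat.lt_or_ge 1 (n + 1) with h1 | h1
      · have hn1 : 1 ≤ n := by omega
        exact lt_trans (ih hn1 (by omega)) (hmono n hn1 (by omega))
      · have hn0 : n = 0 := by omega
        subst hn0; exact hpos
  set A : ℝ := σ ^ 2 + P * ∑ k ∈ Finset.Icc 1 i, (h k) ^ 2 with hA_def
  set B : ℝ := Real.sqrt P * ∑ k ∈ Finset.Icc 1 i, h k with hB_def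
  have hsum_nonneg : (0:ℝ) ≤ ∑ k ∈ Finset.Icc 1 i, (h k) ^ 2 :=
    Finset.sum_nonneg fun k _ => sq_nonneg _
  have hA : 0 < A := by
    have : 0 < σ ^ 2 := by positivity
    have h2 : 0 ≤ P * ∑ k ∈ Finset.Icc 1 i, (h k) ^ 2 := by positivity
    rw [hA_def]; linarith
  have hB_nonneg : 0 ≤ B := by
    rw [hB_def]
    apply mul_nonneg hsP.le
    apply Finset.sum_nonneg
    intro k hk
    have hk' := Finset.mem_Icc.1 hk
    exact (hposk k hk'.1 (le_trans hk'.2 hiK)).le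
  have hquad : ∀ a : ℝ, f h P σ i a = A * a ^ 2 - 2 * B * a + i := by
    intro a
    have hs : Real.sqrt P ^ 2 = P := Real.sq_sqrt hP.le
    have hterm : ∀ k ∈ Finset.Icc 1 i, (a * h k * Real.sqrt P - 1) ^ 2
        = (h k) ^ 2 * (P * a ^ 2) - h k * (2 * Real.sqrt P * a) + 1 := by
      intro k _
      linear_combination a ^ 2 * (h k) ^ 2 * hs
    rw [f, Finset.sum_congr rfl hterm, Finset.sum_add_distrib, Finset.sum_sub_distrib,
      ← Finset.sum_mul, ← Finset.sum_mul, Finset.sum_const, Nat.card_Icc,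
      nsmul_eq_mul]
    simp only [Nat.add_sub_cancel]
    rw [hA_def, hB_def]
    ring
  have hgdef : g h P σ i = B / A := by
    rw [g, ← hB_def, ← hA_def]
  have hg : A * g h P σ i = B := by
    rw [hgdef]; field_simp
  set gv := g h P σ i with hgv
  have hg_nonneg : 0 ≤ gv := by
    have h0 : (0:ℝ) ≤ B / A := div_nonneg hB_nonneg hA.le
    rwa [← hgdef] at h0
  have hnormal : ∀ a : ℝ, f h P σ i a = A * (a - gv) ^ 2 + ((i : ℝ) - B * gv) := by
    intro a
    rw [hquad a]
    linear_combination (2 * a - gv) * hg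
  set c : ℝ := 1 / (h i * Real.sqrt P) with hc_def
  set d : ℝ := 1 / (h (i + 1) * Real.sqrt P) with hd_def
  have hi_pos : 0 < h i := hposk i hi1 hiK
  have hc_pos : 0 < c := by rw [hc_def]; positivity
  have hdc : i < K → d < c := by
    intro hiK'
    rw [hc_def, hd_def]
    apply one_div_lt_one_div_of_lt (by positivity)
    exact mul_lt_mul_of_pos_right (hmono i hi1 hiK') hsP
  refine ⟨?_, ?_, ?_⟩
  · -- part (a)
    intro _ a _
    rw [hnormal a, hnormal gv]
    nlinarith [mul_nonneg hA.le (sq_nonneg (a - gv))]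
  · -- part (b)
    intro hcg
    constructor
    · constructor
      · split_ifs with hik
        · exact hc_pos.le
        · exact hdc (lt_of_le_of_ne hiK hik)
      · rw [if_neg (by omega : ¬ i = 0)]
    · intro a ha
      have hac : a ≤ c := by
        have h2 := ha.2
        rw [if_neg (by omega : ¬ i = 0)] at h2
        exact h2
      rw [hnormal a, hnormal c]
      have h1 : (c - gv) ^ 2 ≤ (a - gv) ^ 2 := by
        nlinarith [mul_nonneg (sub_nonneg.2 hac) (sub_pos.2 hcg).le, sq_nonneg (c - a)]
      nlinarith [mul_le_mul_of_nonneg_left h1 hA.le]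
  · -- part (c)
    intro hiK' hgd
    have hd_pos : 0 < d := by
      have := hposk (i + 1) (by omega) hiK'
      rw [hd_def]; positivity
    have hdc' : d < c := hdc hiK'
    have hstrict : ∀ a : ℝ, memS K h P i a → f h P σ i d < f h P σ i a := by
      intro a ha
      have hda : d < a := by
        have h1 := ha.1
        rw [if_neg (by omega : ¬ i = K)] at h1
        exact h1
      rw [hnormal a, hnormal d]
      have h1 : (d - gv) ^ 2 < (a - gv) ^ 2 := by
        nlinarith [mul_pos (sub_pos.2 hda) (sub_pos.2 hda),
          mul_nonneg (sub_pos.2 hda).le (sub_nonneg.2 hgd)]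
      nlinarith [mul_lt_mul_of_pos_left h1 hA]
    refine ⟨⟨?_, ?_⟩, hstrict⟩
    · rintro y ⟨a, ha, rfl⟩
      exact (hstrict a ha).le
    · intro m hm
      by_contra hmd
      push_neg at hmd
      have htpos : 0 < m - f h P σ i d := by linarith
      set t : ℝ := m - f h P σ i d with ht_def
      set ε : ℝ := min (c - d) (t / (2 * (2 * A * c + 1))) with hε_def
      have hden : (0:ℝ) < 2 * (2 * A * c + 1) := by nlinarith [mul_pos hA hc_pos]
      have hεpos : 0 < ε := lt_min (by linarith) (div_pos htpos hden)
      have hεle1 : ε ≤ c - d := min_le_left _ _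
      have hεle2 : ε ≤ t / (2 * (2 * A * c + 1)) := min_le_right _ _
      have hmem : memS K h P i (d + ε) := by
        constructor
        · rw [if_neg (by omega : ¬ i = K)]; linarith
        · rw [if_neg (by omega : ¬ i = 0)]; linarith
      have hle : m ≤ f h P σ i (d + ε) := hm ⟨d + ε, hmem, rfl⟩
      have hkey : A * ((d + ε - gv) ^ 2 - (d - gv) ^ 2) < t := by
        have h1 : (d + ε - gv) ^ 2 - (d - gv) ^ 2 = ε * (2 * (d - gv) + ε) := by ring
        have h2 : 2 * (d - gv) + ε ≤ 2 * c := by linarith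
        have h3 : ε * (2 * (d - gv) + ε) ≤ ε * (2 * c) :=
          mul_le_mul_of_nonneg_left h2 hεpos.le
        have h4 : A * (ε * (2 * c)) < ε * (2 * (2 * A * c + 1)) := by nlinarith
        have h5 : ε * (2 * (2 * A * c + 1)) ≤ t := by
          calc ε * (2 * (2 * A * c + 1)) ≤ (t / (2 * (2 * A * c + 1))) * (2 * (2 * A * c + 1)) :=
                mul_le_mul_of_nonneg_right hεle2 hden.le
            _ = t := by field_simp
        calc A * ((d + ε - gv) ^ 2 - (d - gv) ^ 2) = A * (ε * (2 * (d - gv) + ε)) := by rw [h1]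
          _ ≤ A * (ε * (2 * c)) := by nlinarith
          _ < t := lt_of_lt_of_le h4 h5
      have hlt : f h P σ i (d + ε) < m := by
        have hfd := hnormal d
        have hfe := hnormal (d + ε)
        rw [ht_def] at hkey
        linarith
      linarith
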